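/- Picard-Fuchs system: let H(x,y) = y²/2 − x²/2 + x⁴/4 and for h > 0 let γ(h) be the real oval {H = h}. Define I₀(h) = ∮_{γ(h)} y dx and I₂(h) = ∮_{γ(h)} x² y dx. Then these Abelian integrals satisfy the linear system 4h·I₀′(h) + I₂′(h) = 3·I₀(h) and 4h·I₀′(h) + (12h + 4)·I₂′(h) = 15·I₂(h) for all h > 0. -/

import Mathlib

open MeasureTheory intervalIntegral Set


/-- For the eight-loop Hamiltonian `H = y²/2 − x²/2 + x⁴/4` and `h > 0`, the exterior
oval `{H = h}` is `y² = 2h + x² − x⁴/2`, `|x| ≤ a h` where `a h` is the positive root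
of `x⁴/4 − x²/2 = h`. -/
noncomputable def a (h : ℝ) : ℝ := Real.sqrt (1 + Real.sqrt (1 + 4*h))

/-- `I₀(h) = ∮_{γ(h)} y dx`, written via the symmetric parametrization of the oval. -/
noncomputable def I₀ (h : ℝ) : ℝ :=
  2 * ∫ x in (-(a h))..(a h), Real.sqrt (2*h + x^2 - x^4/2)

/-- `I₂(h) = ∮_{γ(h)} x²y dx`. -/
noncomputable def I₂ (h : ℝ) : ℝ :=
  2 * ∫ x in (-(a h))..(a h), x^2 * Real.sqrt (2*h + x^2 - x^4/2)

noncomputable def Aa (h : ℝ) : ℝ := 1 + Real.sqrt (1 + 4*h)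

noncomputable def phi (h t : ℝ) : ℝ := Aa h / 2 * (1 + t^2) - 1

noncomputable def J (k : ℕ) (h : ℝ) : ℝ :=
  ∫ t in (-1:ℝ)..1, t^k * Real.sqrt (1 - t^2) * Real.sqrt (phi h t)

noncomputable def L (k : ℕ) (h : ℝ) : ℝ :=
  ∫ t in (-1:ℝ)..1, t^k * Real.sqrt (1 - t^2) * (1 + t^2) / Real.sqrt (phi h t)

lemma sqrt_one_lt {h : ℝ} (hh : 0 < h) : 1 < Real.sqrt (1 + 4*h) := by
  have h1 : (1:ℝ) < 1 + 4*h := by linarith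
  nlinarith [Real.sq_sqrt (by linarith : (0:ℝ) ≤ 1 + 4*h),
    Real.sqrt_nonneg (1 + 4*h)]

lemma Aa_gt_two {h : ℝ} (hh : 0 < h) : 2 < Aa h := by
  have := sqrt_one_lt hh; unfold Aa; linarith

lemma Aa_nonneg (h : ℝ) : 0 ≤ Aa h := by
  have := Real.sqrt_nonneg (1 + 4*h); unfold Aa; linarith

lemma phi_lb {h t : ℝ} (hA : 2 < Aa h) : (Aa h - 2)/2 ≤ phi h t := by
  have ht : 0 ≤ t^2 := sq_nonneg t
  unfold phi; nlinarith

lemma phi_pos {h t : ℝ} (hh : 0 < h) : 0 < phi h t := by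
  have := Aa_gt_two hh; have := phi_lb (h := h) (t := t) this; linarith

lemma sqrt_phi_pos {h t : ℝ} (hh : 0 < h) : 0 < Real.sqrt (phi h t) :=
  Real.sqrt_pos.2 (phi_pos hh)

lemma cont_phi (h : ℝ) : Continuous (fun t => phi h t) := by
  unfold phi; fun_prop

lemma contJ (h : ℝ) (k : ℕ) :
    Continuous (fun t : ℝ => t^k * Real.sqrt (1 - t^2) * Real.sqrt (phi h t)) := by
  apply Continuous.mul
  · exact (continuous_pow k).mul (Real.continuous_sqrt.comp (by fun_prop))
  · exact Real.continuous_sqrt.comp (cont_phi h)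

lemma contL (h : ℝ) (k : ℕ) (hh : 0 < h) :
    Continuous (fun t : ℝ => t^k * Real.sqrt (1 - t^2) * (1 + t^2) / Real.sqrt (phi h t)) := by
  apply Continuous.div
  · exact (((continuous_pow k).mul (Real.continuous_sqrt.comp (by fun_prop))).mul (by fun_prop))
  · exact Real.continuous_sqrt.comp (cont_phi h)
  · exact fun t => ne_of_gt (sqrt_phi_pos hh)

lemma a_sq {h : ℝ} : (a h)^2 = Aa h :=
  Real.sq_sqrt (Aa_nonneg h)

lemma Aa_key {h : ℝ} (hh : 0 < h) : Aa h ^ 2 - 2 * Aa h = 4 * h := by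
  have h0 : (0:ℝ) ≤ 1 + 4*h := by linarith
  have := Real.sq_sqrt h0
  unfold Aa; nlinarith

lemma sqrt_Aa {h : ℝ} : Real.sqrt (Aa h) = a h := rfl

lemma sqrt_split {h t : ℝ} (hh : 0 < h) (ht : t ∈ Set.uIcc (-1:ℝ) 1) :
    Real.sqrt (2*h + (a h * t)^2 - (a h * t)^4/2)
      = a h * (Real.sqrt (1 - t^2) * Real.sqrt (phi h t)) := by
  have ht' : t ∈ Set.Icc (-1:ℝ) 1 := by
    rwa [Set.uIcc_of_le (by norm_num : (-1:ℝ) ≤ 1)] at ht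
  have h1 : (0:ℝ) ≤ 1 - t^2 := by nlinarith [ht'.1, ht'.2]
  have hA := Aa_key hh
  have ha2 : (a h)^2 = Aa h := a_sq
  have h4 : (a h)^4 = Aa h ^ 2 := by nlinarith [ha2]
  have harg : 2*h + (a h * t)^2 - (a h * t)^4/2
      = Aa h * ((1 - t^2) * phi h t) := by
    unfold phi
    linear_combination t^2*ha2 - t^4/2*h4 - (1/2)*hA
  rw [harg, Real.sqrt_mul (Aa_nonneg h), Real.sqrt_mul h1, sqrt_Aa]

lemma I0_eq {h : ℝ} (hh : 0 < h) : I₀ h = 2 * Aa h * J 0 h := by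
  have hsub := intervalIntegral.smul_integral_comp_mul_left
    (fun x => Real.sqrt (2*h + x^2 - x^4/2)) (a := (-1:ℝ)) (b := 1) (a h)
  have hcong : (∫ t in (-1:ℝ)..1, Real.sqrt (2*h + (a h * t)^2 - (a h * t)^4/2))
      = ∫ t in (-1:ℝ)..1, a h * (Real.sqrt (1 - t^2) * Real.sqrt (phi h t)) := by
    apply intervalIntegral.integral_congr
    intro t ht
    exact sqrt_split hh ht
  rw [mul_neg_one, mul_one] at hsub
  unfold I₀
  rw [← hsub, smul_eq_mul, hcong, intervalIntegral.integral_const_mul]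
  have hJ : J 0 h = ∫ t in (-1:ℝ)..1, Real.sqrt (1 - t^2) * Real.sqrt (phi h t) := by
    unfold J; simp
  rw [hJ]
  set X := ∫ t in (-1:ℝ)..1, Real.sqrt (1 - t^2) * Real.sqrt (phi h t) with hX
  have ha2 : (a h)^2 = Aa h := a_sq
  linear_combination 2 * X * ha2

lemma I2_eq {h : ℝ} (hh : 0 < h) : I₂ h = 2 * (Aa h)^2 * J 2 h := by
  have hsub := intervalIntegral.smul_integral_comp_mul_left
    (fun x => x^2 * Real.sqrt (2*h + x^2 - x^4/2)) (a := (-1:ℝ)) (b := 1) (a h)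
  have hcong : (∫ t in (-1:ℝ)..1, (a h * t)^2 * Real.sqrt (2*h + (a h * t)^2 - (a h * t)^4/2))
      = ∫ t in (-1:ℝ)..1, (Aa h * a h) * (t^2 * Real.sqrt (1 - t^2) * Real.sqrt (phi h t)) := by
    apply intervalIntegral.integral_congr
    intro t ht
    show (a h * t)^2 * Real.sqrt (2*h + (a h * t)^2 - (a h * t)^4/2)
      = (Aa h * a h) * (t^2 * Real.sqrt (1 - t^2) * Real.sqrt (phi h t))
    rw [sqrt_split hh ht, mul_pow, a_sq]
    ring
  rw [mul_neg_one, mul_one] at hsub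
  unfold I₂
  rw [← hsub, smul_eq_mul, hcong, intervalIntegral.integral_const_mul]
  have hJ : J 2 h = ∫ t in (-1:ℝ)..1, t^2 * Real.sqrt (1 - t^2) * Real.sqrt (phi h t) := by
    unfold J; norm_num
  rw [hJ]
  set X := ∫ t in (-1:ℝ)..1, t^2 * Real.sqrt (1 - t^2) * Real.sqrt (phi h t) with hX
  have ha2 : (a h)^2 = Aa h := a_sq
  linear_combination 2 * Aa h * X * ha2

lemma hasDerivAt_J (k : ℕ) {h : ℝ} (hh : 0 < h) :
    HasDerivAt (J k) (1/(2*Real.sqrt (1+4*h)) * L k h) h := by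
  set F : ℝ → ℝ → ℝ :=
    fun x t => t^k * Real.sqrt (1 - t^2) * Real.sqrt (phi x t) with hF
  set F' : ℝ → ℝ → ℝ :=
    fun x t => 1/(2*Real.sqrt (1+4*x)) *
      (t^k * Real.sqrt (1 - t^2) * (1 + t^2) / Real.sqrt (phi x t)) with hF'
  set δ : ℝ := Real.sqrt ((Real.sqrt (1+2*h) - 1)/2) with hδ
  have hsq2 : 1 < Real.sqrt (1+2*h) := by
    nlinarith [Real.sq_sqrt (by linarith : (0:ℝ) ≤ 1+2*h), Real.sqrt_nonneg (1+2*h)]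
  have hδ'pos : 0 < (Real.sqrt (1+2*h) - 1)/2 := by linarith
  have hδpos : 0 < δ := Real.sqrt_pos.2 hδ'pos
  -- facts about x in the ball
  have hball : ∀ x ∈ Metric.ball h (h/2), 0 < x ∧
      ∀ t, (Real.sqrt (1+2*h) - 1)/2 ≤ phi x t := by
    intro x hx
    rw [Metric.mem_ball, Real.dist_eq, abs_lt] at hx
    have hx0 : 0 < x := by linarith
    refine ⟨hx0, fun t => ?_⟩
    have h1 : Real.sqrt (1+2*h) ≤ Real.sqrt (1+4*x) :=
      Real.sqrt_le_sqrt (by linarith)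
    have h2 : (Aa x - 2)/2 ≤ phi x t := phi_lb (t := t) (Aa_gt_two hx0)
    have : (Real.sqrt (1+4*x) - 1)/2 ≤ phi x t := by
      unfold Aa at h2; linarith
    linarith
  have main := intervalIntegral.hasDerivAt_integral_of_dominated_loc_of_deriv_le
    (F := F) (F' := F') (x₀ := h) (a := (-1:ℝ)) (b := 1) (μ := volume)
    (bound := fun _ => 1/δ) (Metric.ball_mem_nhds h (half_pos hh))
    (Filter.Eventually.of_forall (fun x => ((contJ x k).aestronglyMeasurable)))
    ((contJ h k).intervalIntegrable _ _)
    ((continuous_const.mul (contL h k hh)).aestronglyMeasurable)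
    ?_ (intervalIntegrable_const) ?_
  · have heq : (∫ t in (-1:ℝ)..1, F' h t) = 1/(2*Real.sqrt (1+4*h)) * L k h := by
      rw [hF']
      rw [intervalIntegral.integral_const_mul]
      rfl
    rw [heq] at main
    exact main.2
  · -- bound
    refine Filter.Eventually.of_forall (fun t => fun ht x hx => ?_)
    obtain ⟨hx0, hphi_lb⟩ := hball x hx
    have ht' : t ∈ Set.Ioc (-1:ℝ) 1 := by
      rwa [Set.uIoc_of_le (by norm_num : (-1:ℝ) ≤ 1)] at ht
    have ht2 : t^2 ≤ 1 := by nlinarith [ht'.1, ht'.2]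
    have habs : |t| ≤ 1 := abs_le.2 ⟨by linarith [ht'.1], ht'.2⟩
    have hs1 : 1 ≤ Real.sqrt (1+4*x) := by
      nlinarith [Real.sq_sqrt (by linarith : (0:ℝ) ≤ 1+4*x), Real.sqrt_nonneg (1+4*x)]
    have hD : δ ≤ Real.sqrt (phi x t) := Real.sqrt_le_sqrt (hphi_lb t)
    have hNabs : |t^k * Real.sqrt (1 - t^2) * (1 + t^2)| ≤ 2 := by
      have h1 : |t^k| ≤ 1 := by
        rw [abs_pow]; exact pow_le_one₀ (abs_nonneg t) habs
      have h2 : Real.sqrt (1 - t^2) ≤ 1 := Real.sqrt_le_one.2 (by nlinarith [sq_nonneg t])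
      have h3 : |1 + t^2| ≤ 2 := by rw [abs_of_nonneg (by positivity)]; linarith
      calc |t^k * Real.sqrt (1 - t^2) * (1 + t^2)|
          = |t^k| * |Real.sqrt (1 - t^2)| * |1 + t^2| := by rw [abs_mul, abs_mul]
        _ ≤ 1 * 1 * 2 := by
            apply mul_le_mul _ h3 (abs_nonneg _) (by norm_num)
            apply mul_le_mul h1 _ (abs_nonneg _) (by norm_num)
            rw [abs_of_nonneg (Real.sqrt_nonneg _)]; exact h2
        _ = 2 := by norm_num
    have hcabs : |1/(2*Real.sqrt (1+4*x))| ≤ 1/2 := by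
      rw [abs_of_nonneg (by positivity)]
      rw [div_le_div_iff₀ (by positivity) (by norm_num)]
      linarith
    rw [Real.norm_eq_abs, hF']
    simp only
    rw [abs_mul, abs_div (t^k * Real.sqrt (1 - t^2) * (1 + t^2))]
    calc |1/(2*Real.sqrt (1+4*x))| * (|t^k * Real.sqrt (1 - t^2) * (1 + t^2)| / |Real.sqrt (phi x t)|)
        ≤ (1/2) * (2/δ) := by
          apply mul_le_mul hcabs _ (by positivity) (by norm_num)
          apply div_le_div₀ (by norm_num) hNabs hδpos
          rw [abs_of_nonneg (Real.sqrt_nonneg _)]; exact hD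
      _ = 1/δ := by field_simp
  · -- differentiability
    refine Filter.Eventually.of_forall (fun t => fun _ x hx => ?_)
    obtain ⟨hx0, hphi_lb⟩ := hball x hx
    have h14 : (0:ℝ) < 1 + 4*x := by linarith
    have hphipos : 0 < phi x t := phi_pos hx0
    have hsqphi : Real.sqrt (phi x t) ≠ 0 := ne_of_gt (sqrt_phi_pos hx0)
    have hsqx : Real.sqrt (1+4*x) ≠ 0 := by positivity
    have inner : HasDerivAt (fun y : ℝ => 1 + 4*y) 4 x := by
      simpa using ((hasDerivAt_id x).const_mul (4:ℝ)).const_add 1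
    have hs : HasDerivAt (fun y : ℝ => Real.sqrt (1 + 4*y))
        (1/(2*Real.sqrt (1+4*x)) * 4) x :=
      (Real.hasDerivAt_sqrt (ne_of_gt h14)).comp x inner
    have hphi : HasDerivAt (fun y : ℝ => phi y t)
        ((1/(2*Real.sqrt (1+4*x)) * 4)/2 * (1+t^2)) x := by
      have : HasDerivAt (fun y : ℝ => (1 + Real.sqrt (1+4*y))/2 * (1+t^2) - 1)
          ((1/(2*Real.sqrt (1+4*x)) * 4)/2 * (1+t^2)) x :=
        (((hs.const_add 1).div_const 2).mul_const (1+t^2)).sub_const 1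
      exact this
    have hsqphi' : HasDerivAt (fun y : ℝ => Real.sqrt (phi y t))
        (1/(2*Real.sqrt (phi x t)) * ((1/(2*Real.sqrt (1+4*x)) * 4)/2 * (1+t^2))) x :=
      (Real.hasDerivAt_sqrt (ne_of_gt hphipos)).comp x hphi
    have := hsqphi'.const_mul (t^k * Real.sqrt (1 - t^2))
    refine this.congr_deriv ?_
    symm
    rw [hF']
    field_simp
    ring

noncomputable def Ee (h κ t : ℝ) : ℝ :=
  κ * ((Real.sqrt (1-t^2))^3 * Real.sqrt (phi h t))
  + κ * t * ((-3)*t*Real.sqrt (1-t^2) * Real.sqrt (phi h t)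
      + (Real.sqrt (1-t^2))^3 * (Aa h * t / (2 * Real.sqrt (phi h t))))

lemma cont_Ee {h : ℝ} (hh : 0 < h) (κ : ℝ) : Continuous (Ee h κ) := by
  unfold Ee
  have h1 : Continuous (fun t : ℝ => Real.sqrt (1 - t^2)) :=
    Real.continuous_sqrt.comp (by fun_prop)
  have h2 : Continuous (fun t : ℝ => Real.sqrt (phi h t)) :=
    Real.continuous_sqrt.comp (cont_phi h)
  have h3 : Continuous (fun t : ℝ => Aa h * t / (2 * Real.sqrt (phi h t))) := by
    apply Continuous.div (by fun_prop) (by fun_prop)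
    intro t
    have := sqrt_phi_pos (t := t) hh
    positivity
  fun_prop

lemma ftc_zero {h : ℝ} (hh : 0 < h) (κ : ℝ) :
    (∫ t in (-1:ℝ)..1, Ee h κ t) = 0 := by
  set g : ℝ → ℝ :=
    fun t => κ * t * ((Real.sqrt (1-t^2))^3 * Real.sqrt (phi h t)) with hg
  have hcont : ContinuousOn g (Set.Icc (-1:ℝ) 1) := by
    apply Continuous.continuousOn
    have h1 : Continuous (fun t : ℝ => Real.sqrt (1 - t^2)) :=
      Real.continuous_sqrt.comp (by fun_prop)
    have h2 : Continuous (fun t : ℝ => Real.sqrt (phi h t)) :=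
      Real.continuous_sqrt.comp (cont_phi h)
    fun_prop
  have hderiv : ∀ t ∈ Set.Ioo (-1:ℝ) 1, HasDerivWithinAt g (Ee h κ t) (Set.Ioi t) t := by
    intro t ht
    apply HasDerivAt.hasDerivWithinAt
    have hu : (0:ℝ) < 1 - t^2 := by nlinarith [ht.1, ht.2]
    have hSne : Real.sqrt (1 - t^2) ≠ 0 := ne_of_gt (Real.sqrt_pos.2 hu)
    have hΦne : Real.sqrt (phi h t) ≠ 0 := ne_of_gt (sqrt_phi_pos hh)
    have hdu : HasDerivAt (fun t : ℝ => 1 - t^2) (-(2*t^1)) t := by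
      simpa using (hasDerivAt_pow 2 t).const_sub 1
    have hS : HasDerivAt (fun t : ℝ => Real.sqrt (1 - t^2))
        (1/(2*Real.sqrt (1 - t^2)) * (-(2*t^1))) t :=
      (Real.hasDerivAt_sqrt (ne_of_gt hu)).comp t hdu
    have hS3 : HasDerivAt (fun t : ℝ => (Real.sqrt (1 - t^2))^3)
        ((3:ℕ) * (Real.sqrt (1 - t^2))^2 * (1/(2*Real.sqrt (1 - t^2)) * (-(2*t^1)))) t :=
      hS.pow 3
    have hdphi : HasDerivAt (fun t : ℝ => phi h t) (Aa h / 2 * (2*t^1)) t := by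
      have : HasDerivAt (fun t : ℝ => Aa h / 2 * (1 + t^2) - 1)
          (Aa h / 2 * (2*t^1)) t := by
        simpa using (((hasDerivAt_pow 2 t).const_add 1).const_mul (Aa h / 2)).sub_const 1
      exact this
    have hΦ : HasDerivAt (fun t : ℝ => Real.sqrt (phi h t))
        (1/(2*Real.sqrt (phi h t)) * (Aa h / 2 * (2*t^1))) t :=
      (Real.hasDerivAt_sqrt (ne_of_gt (phi_pos hh))).comp t hdphi
    have hkt : HasDerivAt (fun t : ℝ => κ * t) κ t := by
      simpa using (hasDerivAt_id t).const_mul κ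
    have := hkt.mul (hS3.mul hΦ)
    refine this.congr_deriv ?_
    symm
    simp only [Pi.mul_apply]
    have hS2 : Real.sqrt (1 - t^2)^2 = 1 - t^2 := Real.sq_sqrt hu.le
    unfold Ee
    field_simp
    linear_combination
  have hint : IntervalIntegrable (Ee h κ) volume (-1) 1 :=
    (cont_Ee hh κ).intervalIntegrable _ _
  have := intervalIntegral.integral_eq_sub_of_hasDeriv_right_of_le
    (by norm_num : (-1:ℝ) ≤ 1) hcont hderiv hint
  rw [this, hg]
  norm_num

lemma ptwise1 {h t : ℝ} (S Φ : ℝ) (hΦ : 0 < Φ)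
    (hS2 : S^2 = 1 - t^2) (hΦ2 : Φ^2 = Aa h/2*(1+t^2) - 1) :
    4*(t^2*S*Φ) + (Aa h*(Aa h-2)/2)*(S*(1+t^2)/Φ) + (Aa h/2)*(t^2*S*(1+t^2)/Φ)
      - (Aa h+1)*(S*Φ)
    = -(S^3*Φ) + (-1)*t*((-3)*t*S*Φ + S^3*(Aa h*t/(2*Φ))) := by
  have hne : Φ ≠ 0 := ne_of_gt hΦ
  field_simp
  linear_combination (S*t^2*Aa h + 2*S*Φ^2) * hS2 + (-2*S*Aa h) * hΦ2

lemma ptwise2 {h t : ℝ} (S Φ : ℝ) (hΦ : 0 < Φ)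
    (hS2 : S^2 = 1 - t^2) (hΦ2 : Φ^2 = Aa h/2*(1+t^2) - 1) :
    (Aa h^2 - 2*Aa h)*(2*(S*Φ) + (Aa h/2)*(S*(1+t^2)/Φ))
      + (3*Aa h^2 - 6*Aa h + 4)*(4*Aa h*(t^2*S*Φ) + (Aa h^2/2)*(t^2*S*(1+t^2)/Φ))
      - 15*Aa h^2*(Aa h - 1)*(t^2*S*Φ)
    = (3*Aa h^2 - 4*Aa h)*(S^3*Φ)
      + (3*Aa h^2 - 4*Aa h)*t*((-3)*t*S*Φ + S^3*(Aa h*t/(2*Φ))) := by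
  have hne : Φ ≠ 0 := ne_of_gt hΦ
  field_simp
  linear_combination (4*S*t^2*Aa h^2 - 3*S*t^2*Aa h^3 + 8*S*Φ^2*Aa h
    - 6*S*Φ^2*Aa h^2) * hS2
    + ((-2)*Aa h^2 + 6*t^2*Aa h^2 - 6*t^2*Aa h^3)*S * hΦ2

lemma sqrt_facts {h t : ℝ} (hh : 0 < h) (ht : t ∈ Set.uIcc (-1:ℝ) 1) :
    Real.sqrt (1-t^2)^2 = 1 - t^2 ∧
    Real.sqrt (phi h t)^2 = Aa h/2*(1+t^2) - 1 ∧ 0 < Real.sqrt (phi h t) := by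
  have ht' : t ∈ Set.Icc (-1:ℝ) 1 := by
    rwa [Set.uIcc_of_le (by norm_num : (-1:ℝ) ≤ 1)] at ht
  have h1 : (0:ℝ) ≤ 1 - t^2 := by nlinarith [ht'.1, ht'.2]
  refine ⟨Real.sq_sqrt h1, ?_, sqrt_phi_pos hh⟩
  rw [Real.sq_sqrt (phi_pos hh).le]; rfl

lemma id1 {h : ℝ} (hh : 0 < h) :
    4 * J 2 h + (Aa h*(Aa h-2)/2) * L 0 h + (Aa h/2) * L 2 h
      - (Aa h+1) * J 0 h = 0 := by
  have i1 : IntervalIntegrable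
      (fun t : ℝ => 4 * (t^(2:ℕ) * Real.sqrt (1-t^2) * Real.sqrt (phi h t)))
      volume (-1) 1 := (continuous_const.mul (contJ h 2)).intervalIntegrable _ _
  have i2 : IntervalIntegrable
      (fun t : ℝ => (Aa h*(Aa h-2)/2) *
        (t^(0:ℕ) * Real.sqrt (1-t^2) * (1+t^2) / Real.sqrt (phi h t)))
      volume (-1) 1 := (continuous_const.mul (contL h 0 hh)).intervalIntegrable _ _
  have i3 : IntervalIntegrable
      (fun t : ℝ => (Aa h/2) *
        (t^(2:ℕ) * Real.sqrt (1-t^2) * (1+t^2) / Real.sqrt (phi h t)))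
      volume (-1) 1 := (continuous_const.mul (contL h 2 hh)).intervalIntegrable _ _
  have i4 : IntervalIntegrable
      (fun t : ℝ => (Aa h+1) * (t^(0:ℕ) * Real.sqrt (1-t^2) * Real.sqrt (phi h t)))
      volume (-1) 1 := (continuous_const.mul (contJ h 0)).intervalIntegrable _ _
  have expand : 4 * J 2 h + (Aa h*(Aa h-2)/2) * L 0 h + (Aa h/2) * L 2 h
      - (Aa h+1) * J 0 h
      = ∫ t in (-1:ℝ)..1,
          (4 * (t^(2:ℕ) * Real.sqrt (1-t^2) * Real.sqrt (phi h t))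
          + (Aa h*(Aa h-2)/2) *
              (t^(0:ℕ) * Real.sqrt (1-t^2) * (1+t^2) / Real.sqrt (phi h t))
          + (Aa h/2) * (t^(2:ℕ) * Real.sqrt (1-t^2) * (1+t^2) / Real.sqrt (phi h t))
          - (Aa h+1) * (t^(0:ℕ) * Real.sqrt (1-t^2) * Real.sqrt (phi h t))) := by
    rw [intervalIntegral.integral_sub ((i1.add i2).add i3) i4,
      intervalIntegral.integral_add (i1.add i2) i3,
      intervalIntegral.integral_add i1 i2,
      intervalIntegral.integral_const_mul, intervalIntegral.integral_const_mul,
      intervalIntegral.integral_const_mul, intervalIntegral.integral_const_mul]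
    rfl
  rw [expand]
  have hcong : ∀ t ∈ Set.uIcc (-1:ℝ) 1,
      (4 * (t^(2:ℕ) * Real.sqrt (1-t^2) * Real.sqrt (phi h t))
          + (Aa h*(Aa h-2)/2) *
              (t^(0:ℕ) * Real.sqrt (1-t^2) * (1+t^2) / Real.sqrt (phi h t))
          + (Aa h/2) * (t^(2:ℕ) * Real.sqrt (1-t^2) * (1+t^2) / Real.sqrt (phi h t))
          - (Aa h+1) * (t^(0:ℕ) * Real.sqrt (1-t^2) * Real.sqrt (phi h t)))
        = Ee h (-1) t := by
    intro t ht
    obtain ⟨hS2, hΦ2, hΦ⟩ := sqrt_facts hh ht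
    have key := ptwise1 (h := h) (t := t) _ _ hΦ hS2 hΦ2
    unfold Ee
    linear_combination key
  rw [intervalIntegral.integral_congr hcong]
  exact ftc_zero hh (-1)

lemma id2 {h : ℝ} (hh : 0 < h) :
    2*(Aa h^2-2*Aa h) * J 0 h + ((Aa h^2-2*Aa h)*Aa h/2) * L 0 h
      + (4*Aa h*(3*Aa h^2-6*Aa h+4) - 15*Aa h^2*(Aa h-1)) * J 2 h
      + ((3*Aa h^2-6*Aa h+4)*Aa h^2/2) * L 2 h = 0 := by
  have i1 : IntervalIntegrable
      (fun t : ℝ => 2*(Aa h^2-2*Aa h) *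
        (t^(0:ℕ) * Real.sqrt (1-t^2) * Real.sqrt (phi h t)))
      volume (-1) 1 := (continuous_const.mul (contJ h 0)).intervalIntegrable _ _
  have i2 : IntervalIntegrable
      (fun t : ℝ => ((Aa h^2-2*Aa h)*Aa h/2) *
        (t^(0:ℕ) * Real.sqrt (1-t^2) * (1+t^2) / Real.sqrt (phi h t)))
      volume (-1) 1 := (continuous_const.mul (contL h 0 hh)).intervalIntegrable _ _
  have i3 : IntervalIntegrable
      (fun t : ℝ => (4*Aa h*(3*Aa h^2-6*Aa h+4) - 15*Aa h^2*(Aa h-1)) *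
        (t^(2:ℕ) * Real.sqrt (1-t^2) * Real.sqrt (phi h t)))
      volume (-1) 1 := (continuous_const.mul (contJ h 2)).intervalIntegrable _ _
  have i4 : IntervalIntegrable
      (fun t : ℝ => ((3*Aa h^2-6*Aa h+4)*Aa h^2/2) *
        (t^(2:ℕ) * Real.sqrt (1-t^2) * (1+t^2) / Real.sqrt (phi h t)))
      volume (-1) 1 := (continuous_const.mul (contL h 2 hh)).intervalIntegrable _ _
  have expand : 2*(Aa h^2-2*Aa h) * J 0 h + ((Aa h^2-2*Aa h)*Aa h/2) * L 0 h
      + (4*Aa h*(3*Aa h^2-6*Aa h+4) - 15*Aa h^2*(Aa h-1)) * J 2 h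
      + ((3*Aa h^2-6*Aa h+4)*Aa h^2/2) * L 2 h
      = ∫ t in (-1:ℝ)..1,
          (2*(Aa h^2-2*Aa h) * (t^(0:ℕ) * Real.sqrt (1-t^2) * Real.sqrt (phi h t))
          + ((Aa h^2-2*Aa h)*Aa h/2) *
              (t^(0:ℕ) * Real.sqrt (1-t^2) * (1+t^2) / Real.sqrt (phi h t))
          + (4*Aa h*(3*Aa h^2-6*Aa h+4) - 15*Aa h^2*(Aa h-1)) *
              (t^(2:ℕ) * Real.sqrt (1-t^2) * Real.sqrt (phi h t))
          + ((3*Aa h^2-6*Aa h+4)*Aa h^2/2) *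
              (t^(2:ℕ) * Real.sqrt (1-t^2) * (1+t^2) / Real.sqrt (phi h t))) := by
    rw [intervalIntegral.integral_add ((i1.add i2).add i3) i4,
      intervalIntegral.integral_add (i1.add i2) i3,
      intervalIntegral.integral_add i1 i2,
      intervalIntegral.integral_const_mul, intervalIntegral.integral_const_mul,
      intervalIntegral.integral_const_mul, intervalIntegral.integral_const_mul]
    rfl
  rw [expand]
  have hcong : ∀ t ∈ Set.uIcc (-1:ℝ) 1,
      (2*(Aa h^2-2*Aa h) * (t^(0:ℕ) * Real.sqrt (1-t^2) * Real.sqrt (phi h t))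
          + ((Aa h^2-2*Aa h)*Aa h/2) *
              (t^(0:ℕ) * Real.sqrt (1-t^2) * (1+t^2) / Real.sqrt (phi h t))
          + (4*Aa h*(3*Aa h^2-6*Aa h+4) - 15*Aa h^2*(Aa h-1)) *
              (t^(2:ℕ) * Real.sqrt (1-t^2) * Real.sqrt (phi h t))
          + ((3*Aa h^2-6*Aa h+4)*Aa h^2/2) *
              (t^(2:ℕ) * Real.sqrt (1-t^2) * (1+t^2) / Real.sqrt (phi h t)))
        = Ee h (3*Aa h^2-4*Aa h) t := by
    intro t ht
    obtain ⟨hS2, hΦ2, hΦ⟩ := sqrt_facts hh ht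
    have key := ptwise2 (h := h) (t := t) _ _ hΦ hS2 hΦ2
    unfold Ee
    linear_combination key
  rw [intervalIntegral.integral_congr hcong]
  exact ftc_zero hh _

/-- Picard–Fuchs system for the Abelian integrals on the exterior annulus of the
eight loop:  `4h·I₀′ + I₂′ = 3I₀` and `4h·I₀′ + (12h+4)·I₂′ = 15I₂` for `h > 0`. -/
theorem picard_fuchs : ∀ h : ℝ, 0 < h →
    4*h * deriv I₀ h + deriv I₂ h = 3 * I₀ h
  ∧ 4*h * deriv I₀ h + (12*h + 4) * deriv I₂ h = 15 * I₂ h := by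
  intro h hh
  have h14 : (0:ℝ) < 1 + 4*h := by linarith
  have hs1 : 1 < Real.sqrt (1+4*h) := sqrt_one_lt hh
  have hs2 : Real.sqrt (1+4*h)^2 = 1+4*h := Real.sq_sqrt h14.le
  have inner : HasDerivAt (fun y : ℝ => 1 + 4*y) 4 h := by
    simpa using ((hasDerivAt_id h).const_mul (4:ℝ)).const_add 1
  have hsd : HasDerivAt (fun y : ℝ => Real.sqrt (1 + 4*y))
      (1/(2*Real.sqrt (1+4*h)) * 4) h :=
    (Real.hasDerivAt_sqrt (ne_of_gt h14)).comp h inner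
  have hAad : HasDerivAt Aa (1/(2*Real.sqrt (1+4*h)) * 4) h := by
    unfold Aa
    exact hsd.const_add 1
  have hJ0 := hasDerivAt_J 0 hh
  have hJ2 := hasDerivAt_J 2 hh
  have hev0 : I₀ =ᶠ[nhds h] fun x => 2 * Aa x * J 0 x :=
    (eventually_gt_nhds hh).mono fun x hx => I0_eq hx
  have hev2 : I₂ =ᶠ[nhds h] fun x => 2 * Aa x ^ 2 * J 2 x :=
    (eventually_gt_nhds hh).mono fun x hx => by
      simpa using I2_eq hx
  have hI0d : HasDerivAt I₀
      (2 * (1/(2*Real.sqrt (1+4*h)) * 4) * J 0 h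
        + 2 * Aa h * (1/(2*Real.sqrt (1+4*h)) * L 0 h)) h :=
    ((hAad.const_mul 2).mul hJ0).congr_of_eventuallyEq hev0
  have hI2d : HasDerivAt I₂
      (2 * ((2:ℕ) * Aa h ^ 1 * (1/(2*Real.sqrt (1+4*h)) * 4)) * J 2 h
        + 2 * Aa h ^ 2 * (1/(2*Real.sqrt (1+4*h)) * L 2 h)) h :=
    (((hAad.pow 2).const_mul 2).mul hJ2).congr_of_eventuallyEq hev2
  have hd0 := hI0d.deriv
  have hd2 := hI2d.deriv
  have hid1 := id1 hh
  have hid2 := id2 hh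
  have hAs : Aa h = 1 + Real.sqrt (1+4*h) := rfl
  have hsne : Real.sqrt (1+4*h) ≠ 0 := by positivity
  rw [hAs] at hid1 hid2
  constructor
  · rw [hd0, hd2, I0_eq hh, hAs]
    push_cast
    field_simp
    linear_combination (2*(1+Real.sqrt (1+4*h))) * hid1
      - (4*J 0 h + (1+Real.sqrt (1+4*h))*L 0 h) * hs2
  · rw [hd0, hd2, I2_eq hh, hAs]
    push_cast
    field_simp
    linear_combination 2 * hid2
      - (4*J 0 h + (1+Real.sqrt (1+4*h))*L 0 h
        + 3*(1+Real.sqrt (1+4*h))*(8*J 2 h + (1+Real.sqrt (1+4*h))*L 2 h)) * hs2
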